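/- Let (H,R,χ) be a pre-Cartier quasitriangular bialgebra. Then χ is a Hochschild 2-cocycle of the coalgebra H, i.e. χ₁₂ + (Δ⊗Id)(χ) = χ₂₃ + (Id⊗Δ)(χ) in H⊗H⊗H. -/

import Mathlib

open scoped TensorProduct

noncomputable section

variable (k H : Type*) [CommRing k] [Ring H] [Bialgebra k H]

/-- leg embedding `a ⊗ b ↦ a ⊗ b ⊗ 1` into `H ⊗ (H ⊗ H)`. -/
def leg12 : H ⊗[k] H →ₐ[k] H ⊗[k] (H ⊗[k] H) :=
  Algebra.TensorProduct.map (AlgHom.id k H) Algebra.TensorProduct.includeLeft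

/-- leg embedding `a ⊗ b ↦ 1 ⊗ a ⊗ b`. -/
def leg23 : H ⊗[k] H →ₐ[k] H ⊗[k] (H ⊗[k] H) :=
  Algebra.TensorProduct.includeRight

/-- leg embedding `a ⊗ b ↦ a ⊗ 1 ⊗ b`. -/
def leg13 : H ⊗[k] H →ₐ[k] H ⊗[k] (H ⊗[k] H) :=
  Algebra.TensorProduct.map (AlgHom.id k H) Algebra.TensorProduct.includeRight

/-- `(Id ⊗ Δ)` as an algebra map `H ⊗ H → H ⊗ (H ⊗ H)`. -/
def idComul : H ⊗[k] H →ₐ[k] H ⊗[k] (H ⊗[k] H) :=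
  Algebra.TensorProduct.map (AlgHom.id k H) (Bialgebra.comulAlgHom k H)

/-- `(Δ ⊗ Id)` as an algebra map `H ⊗ H → H ⊗ (H ⊗ H)` (after reassociation). -/
def comulId : H ⊗[k] H →ₐ[k] H ⊗[k] (H ⊗[k] H) :=
  (Algebra.TensorProduct.assoc k k k H H H).toAlgHom.comp
    (Algebra.TensorProduct.map (Bialgebra.comulAlgHom k H) (AlgHom.id k H))

/-- the flip `a ⊗ b ↦ b ⊗ a` as an algebra map. -/
def swapT : H ⊗[k] H →ₐ[k] H ⊗[k] H := (Algebra.TensorProduct.comm k H H).toAlgHom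

/-- A quasitriangular structure on the bialgebra `H`. -/
structure QT where
  R : H ⊗[k] H
  Rinv : H ⊗[k] H
  mul_inv : R * Rinv = 1
  inv_mul : Rinv * R = 1
  quasi_cocomm : ∀ h : H, swapT k H (Coalgebra.comul (R := k) h) * R = R * Coalgebra.comul (R := k) h
  hex1 : idComul k H R = leg13 k H R * leg12 k H R
  hex2 : comulId k H R = leg13 k H R * leg23 k H R

/-- A pre-Cartier quasitriangular bialgebra structure on `H`. -/
structure PreCartier extends QT k H where
  χ : H ⊗[k] H
  chi_comm : ∀ h : H, χ * Coalgebra.comul (R := k) h = Coalgebra.comul (R := k) h * χ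
  chi_hex1 : idComul k H χ = leg12 k H χ + leg12 k H Rinv * leg13 k H χ * leg12 k H R
  chi_hex2 : comulId k H χ = leg23 k H χ + leg23 k H Rinv * leg13 k H χ * leg23 k H R

/-- swap of legs 2 and 3 of `H ⊗ (H ⊗ H)`, as an algebra map. -/
def swap23 : H ⊗[k] (H ⊗[k] H) →ₐ[k] H ⊗[k] (H ⊗[k] H) :=
  Algebra.TensorProduct.map (AlgHom.id k H) (Algebra.TensorProduct.comm k H H).toAlgHom

lemma swap23_leg12 (x : H ⊗[k] H) : swap23 k H (leg12 k H x) = leg13 k H x := by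
  induction x using TensorProduct.induction_on with
  | zero => simp
  | tmul a b => simp [swap23, leg12, leg13]
  | add x y hx hy => rw [map_add, map_add, hx, hy, map_add]

lemma swap23_leg13 (x : H ⊗[k] H) : swap23 k H (leg13 k H x) = leg12 k H x := by
  induction x using TensorProduct.induction_on with
  | zero => simp
  | tmul a b => simp [swap23, leg12, leg13]
  | add x y hx hy => rw [map_add, map_add, hx, hy, map_add]

lemma swap23_idComul (Q : QT k H) (x : H ⊗[k] H) :
    swap23 k H (idComul k H x) * leg23 k H Q.R = leg23 k H Q.R * idComul k H x := by
  induction x using TensorProduct.induction_on with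
  | zero => simp
  | tmul a b =>
      have h1 : idComul k H (a ⊗ₜ[k] b) = a ⊗ₜ[k] (Coalgebra.comul (R := k) b) := by
        simp [idComul]
      have h2 : swap23 k H (a ⊗ₜ[k] (Coalgebra.comul (R := k) b)) =
          a ⊗ₜ[k] (swapT k H (Coalgebra.comul (R := k) b)) := by
        simp [swap23, swapT]
      have h3 : (leg23 k H Q.R : H ⊗[k] (H ⊗[k] H)) = (1 : H) ⊗ₜ[k] Q.R := by
        simp [leg23]
      rw [h1, h2, h3, Algebra.TensorProduct.tmul_mul_tmul,
        Algebra.TensorProduct.tmul_mul_tmul, mul_one, one_mul, Q.quasi_cocomm b]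
  | add x y hx hy =>
      rw [map_add, map_add, add_mul, mul_add, hx, hy]

lemma leg12_mul_assoc (z w : H ⊗[k] H) (c : H) :
    leg12 k H z * (Algebra.TensorProduct.assoc k k k H H H) (w ⊗ₜ[k] c) =
      (Algebra.TensorProduct.assoc k k k H H H) ((z * w) ⊗ₜ[k] c) := by
  induction z using TensorProduct.induction_on with
  | zero => simp
  | tmul a b =>
      induction w using TensorProduct.induction_on with
      | zero => simp
      | tmul p q =>
          simp [leg12, Algebra.TensorProduct.assoc_tmul,
            Algebra.TensorProduct.tmul_mul_tmul]
      | add u v hu hv =>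
          rw [TensorProduct.add_tmul, map_add, mul_add, hu, hv, mul_add,
            TensorProduct.add_tmul, map_add]
  | add u v hu hv =>
      rw [map_add, add_mul, hu, hv, add_mul, TensorProduct.add_tmul, map_add]

lemma assoc_mul_leg12 (z w : H ⊗[k] H) (c : H) :
    (Algebra.TensorProduct.assoc k k k H H H) (w ⊗ₜ[k] c) * leg12 k H z =
      (Algebra.TensorProduct.assoc k k k H H H) ((w * z) ⊗ₜ[k] c) := by
  induction z using TensorProduct.induction_on with
  | zero => simp
  | tmul a b =>
      induction w using TensorProduct.induction_on with
      | zero => simp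
      | tmul p q =>
          simp [leg12, Algebra.TensorProduct.assoc_tmul,
            Algebra.TensorProduct.tmul_mul_tmul]
      | add u v hu hv =>
          rw [TensorProduct.add_tmul, map_add, add_mul, hu, hv, add_mul,
            TensorProduct.add_tmul, map_add]
  | add u v hu hv =>
      rw [map_add, mul_add, hu, hv, mul_add, TensorProduct.add_tmul, map_add]

lemma leg12_chi_comm (P : PreCartier k H) (x : H ⊗[k] H) :
    leg12 k H P.χ * comulId k H x = comulId k H x * leg12 k H P.χ := by
  induction x using TensorProduct.induction_on with
  | zero => simp
  | tmul a b =>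
      have h1 : comulId k H (a ⊗ₜ[k] b) =
          (Algebra.TensorProduct.assoc k k k H H H)
            ((Coalgebra.comul (R := k) a) ⊗ₜ[k] b) := by
        simp [comulId]
      rw [h1, leg12_mul_assoc, assoc_mul_leg12, P.chi_comm a]
  | add u v hu hv => rw [map_add, mul_add, add_mul, hu, hv]

/-- the infinitesimal `R`-matrix of a pre-Cartier quasitriangular bialgebra is a
Hochschild 2-cocycle of the coalgebra `H`: `χ₁₂ + (Δ⊗Id)(χ) = χ₂₃ + (Id⊗Δ)(χ)`. -/
theorem infinitesimal_R_matrix_is_two_cocycle (P : PreCartier k H) :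
    leg12 k H P.χ + comulId k H P.χ = leg23 k H P.χ + idComul k H P.χ := by
  set x12 := leg12 k H P.χ with hx12
  set x13 := leg13 k H P.χ with hx13
  set x23 := leg23 k H P.χ with hx23
  set a12 := leg12 k H P.R with ha12
  set a13 := leg13 k H P.R with ha13
  set a23 := leg23 k H P.R with ha23
  set b12 := leg12 k H P.Rinv with hb12
  set b13 := leg13 k H P.Rinv with hb13
  set b23 := leg23 k H P.Rinv with hb23
  have hb13a13 : b13 * a13 = 1 := by
    rw [hb13, ha13, ← map_mul, P.inv_mul, map_one]
  have hb23a23 : b23 * a23 = 1 := by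
    rw [hb23, ha23, ← map_mul, P.inv_mul, map_one]
  -- χ₁₂ commutes with (Δ⊗id)(R) = R₁₃ R₂₃
  have hC : x12 * (a13 * a23) = a13 * a23 * x12 := by
    rw [ha13, ha23, ← P.hex2]
    exact leg12_chi_comm k H P P.R
  -- swap legs 2,3 in the first χ-hexagon
  have hσ : swap23 k H (idComul k H P.χ) = x13 + b13 * x12 * a13 := by
    rw [P.chi_hex1, map_add, map_mul, map_mul]
    simp only [swap23_leg12, swap23_leg13]
    rfl
  have hE : swap23 k H (idComul k H P.χ) * a23 = a23 * idComul k H P.χ :=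
    swap23_idComul k H P.toQT P.χ
  have hE' : x13 * a23 + b13 * x12 * a13 * a23 =
      a23 * x12 + a23 * (b12 * x13 * a12) := by
    have := hE
    rw [hσ, add_mul, P.chi_hex1, mul_add] at this
    exact this
  have hmid : b13 * x12 * a13 * a23 = a23 * x12 := by
    rw [mul_assoc, mul_assoc, hC, ← mul_assoc, ← mul_assoc, hb13a13, one_mul]
  have key2 : x13 * a23 = a23 * (b12 * x13 * a12) := by
    have h := hE'
    rw [hmid, add_comm (x13 * a23)] at h
    exact add_left_cancel h
  have star : b23 * x13 * a23 = b12 * x13 * a12 := by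
    calc b23 * x13 * a23 = b23 * (x13 * a23) := by rw [mul_assoc]
      _ = b23 * (a23 * (b12 * x13 * a12)) := by rw [key2]
      _ = b23 * a23 * (b12 * x13 * a12) := (mul_assoc _ _ _).symm
      _ = b12 * x13 * a12 := by rw [hb23a23, one_mul]
  rw [P.chi_hex1, P.chi_hex2, ← hx12, ← hx13, ← hx23, ← ha12, ← ha23,
    ← hb12, ← hb23, star]
  abel

end
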